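/- Flow certificate implies spanning connectedness: let V and E be nonempty finite sets, src, tgt : E → V (an oriented multigraph), r ∈ V a fixed root, and z : E → {0,1} (active-edge indicators). Define α : V → ℝ by α(r) = |V| − 1 and α(v) = −1 for v ≠ r. Suppose there exists ρ : E → ℝ such that ρ(e) = 0 whenever z(e) = 0, and for every v ∈ V the net divergence Σ_{e : src(e)=v} ρ(e) − Σ_{e : tgt(e)=v} ρ(e) = α(v). Then the subgraph of active edges is spanning connected: for every v ∈ V there is a walk from v to r using only edges e with z(e) = 1 (traversed in either direction). -/

import Mathlib

/-- Flow certificate implies spanning connectedness: on an oriented finite multigraph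
`(V, E, src, tgt)` with root `r`, injections `α(r) = |V| − 1` and `α(v) = −1` otherwise,
if a flow `ρ` vanishing on inactive edges (`z e = false`) satisfies the divergence
equations `Σ_{src e = v} ρ(e) − Σ_{tgt e = v} ρ(e) = α(v)` at every vertex, then every
vertex is joined to the root by a walk using only active edges. -/
theorem flow_certificate_connected (V E : Type*) [Fintype V] [Fintype E]
    [Nonempty V] [Nonempty E] [DecidableEq V]
    (src tgt : E → V) (r : V) (z : E → Bool) (α : V → ℝ)
    (hα : ∀ v, α v = if v = r then (Fintype.card V : ℝ) - 1 else -1)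
    (ρ : E → ℝ) (hρ : ∀ e, z e = false → ρ e = 0)
    (hdiv : ∀ v, (∑ e ∈ Finset.univ.filter fun e => src e = v, ρ e) -
      (∑ e ∈ Finset.univ.filter fun e => tgt e = v, ρ e) = α v) :
    ∀ v : V, Relation.ReflTransGen
      (fun a b => ∃ e, z e = true ∧ ((src e = a ∧ tgt e = b) ∨ (src e = b ∧ tgt e = a)))
      v r := by
  classical
  set rel := fun a b => ∃ e, z e = true ∧ ((src e = a ∧ tgt e = b) ∨ (src e = b ∧ tgt e = a))
    with hrel
  intro v
  by_contra hv
  set T : Finset V := Finset.univ.filter (fun u => ¬ Relation.ReflTransGen rel u r) with hT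
  have hvT : v ∈ T := by simp [hT, hv]
  have hrT : r ∉ T := by simp [hT]; exact Relation.ReflTransGen.refl
  -- edges with nonzero flow don't cross the boundary of T
  have hcross : ∀ e, ρ e ≠ 0 → (src e ∈ T ↔ tgt e ∈ T) := by
    intro e hρe
    have hz : z e = true := by
      cases h : z e
      · exact absurd (hρ e h) hρe
      · rfl
    have h1 : Relation.ReflTransGen rel (src e) (tgt e) :=
      Relation.ReflTransGen.single ⟨e, hz, Or.inl ⟨rfl, rfl⟩⟩
    have h2 : Relation.ReflTransGen rel (tgt e) (src e) :=
      Relation.ReflTransGen.single ⟨e, hz, Or.inr ⟨rfl, rfl⟩⟩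
    simp only [hT, Finset.mem_filter, Finset.mem_univ, true_and]
    constructor
    · intro hs ht; exact hs (h1.trans ht)
    · intro ht hs; exact ht (h2.trans hs)
  have hs1 : ∑ u ∈ T, ∑ e ∈ Finset.univ.filter fun e => src e = u, ρ e
      = ∑ e ∈ Finset.univ.filter fun e => src e ∈ T, ρ e :=
    Finset.sum_fiberwise_eq_sum_filter _ _ _ _
  have hs2 : ∑ u ∈ T, ∑ e ∈ Finset.univ.filter fun e => tgt e = u, ρ e
      = ∑ e ∈ Finset.univ.filter fun e => tgt e ∈ T, ρ e :=
    Finset.sum_fiberwise_eq_sum_filter _ _ _ _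
  have hb1 : ∑ e ∈ Finset.univ.filter fun e => src e ∈ T, ρ e
      = ∑ e ∈ Finset.univ.filter fun e => src e ∈ T ∧ tgt e ∈ T, ρ e := by
    refine (Finset.sum_subset ?_ ?_).symm
    · intro e he
      simp only [Finset.mem_filter, Finset.mem_univ, true_and] at he ⊢
      exact he.1
    · intro e he hne
      simp only [Finset.mem_filter, Finset.mem_univ, true_and] at he hne
      by_contra hρe
      exact hne ⟨he, (hcross e hρe).mp he⟩
  have hb2 : ∑ e ∈ Finset.univ.filter fun e => tgt e ∈ T, ρ e
      = ∑ e ∈ Finset.univ.filter fun e => src e ∈ T ∧ tgt e ∈ T, ρ e := by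
    refine (Finset.sum_subset ?_ ?_).symm
    · intro e he
      simp only [Finset.mem_filter, Finset.mem_univ, true_and] at he ⊢
      exact he.2
    · intro e he hne
      simp only [Finset.mem_filter, Finset.mem_univ, true_and] at he hne
      by_contra hρe
      exact hne ⟨(hcross e hρe).mpr he, he⟩
  have hsum0 : ∑ u ∈ T, α u = 0 := by
    calc ∑ u ∈ T, α u
        = ∑ u ∈ T, ((∑ e ∈ Finset.univ.filter fun e => src e = u, ρ e)
            - ∑ e ∈ Finset.univ.filter fun e => tgt e = u, ρ e) := by
          exact Finset.sum_congr rfl fun u _ => (hdiv u).symm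
      _ = (∑ u ∈ T, ∑ e ∈ Finset.univ.filter fun e => src e = u, ρ e)
            - ∑ u ∈ T, ∑ e ∈ Finset.univ.filter fun e => tgt e = u, ρ e :=
          Finset.sum_sub_distrib _ _
      _ = 0 := by rw [hs1, hs2, hb1, hb2, sub_self]
  have hsum' : ∑ u ∈ T, α u = -(T.card : ℝ) := by
    have hall : ∀ u ∈ T, α u = -1 := fun u hu => by
      rw [hα u, if_neg (by rintro rfl; exact hrT hu)]
    rw [Finset.sum_congr rfl hall]
    simp
  have hcardpos : 0 < T.card := Finset.card_pos.mpr ⟨v, hvT⟩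
  rw [hsum'] at hsum0
  have : (T.card : ℝ) = 0 := by linarith
  have : T.card = 0 := by exact_mod_cast this
  exact hcardpos.ne' this
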